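/- Let P and Q be probability distributions on a finite set Ω with P absolutely continuous with respect to Q, and define β₁ ∈ (0, 1] by β₁⁻¹ = max_{w ∈ Ω, Q(w)>0} P(w)/Q(w). If β₁ < 1, then TV(P, Q) ≥ ((1 − β₁) / log₂(1/β₁)) · KL(P ‖ Q), where KL is taken with base-2 logarithms and TV(P,Q) = (1/2) Σ_w |P(w) − Q(w)|. -/

import Mathlib

/-!
Statement 15 (Lemma lem:rev_pinsker, Theorem 7 of Verdú 2014): let P and Q be
probability distributions on a finite set Ω with P ≪ Q, and define β₁ ∈ (0, 1] by
β₁⁻¹ = max_{w : Q(w) > 0} P(w)/Q(w).  If β₁ < 1, then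
  TV(P, Q) ≥ ((1 − β₁) / log₂(1/β₁)) · KL(P ‖ Q),
where KL uses base-2 logarithms and TV(P,Q) = (1/2) Σ_w |P(w) − Q(w)|.
-/

open scoped BigOperators

noncomputable section

/-- KL divergence with base-2 logarithms: `KL(P‖Q) = Σ_w P(w) log₂(P(w)/Q(w))`,
with the convention that terms with `P(w) = 0` vanish. -/
def klDivb2 {Ω : Type*} [Fintype Ω] (p q : Ω → ℝ) : ℝ :=
  ∑ w, if p w = 0 then 0 else p w * Real.logb 2 (p w / q w)

/-- Total variation distance `TV(P,Q) = (1/2) Σ_w |P(w) − Q(w)|`. -/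
def tvDist {Ω : Type*} [Fintype Ω] (p q : Ω → ℝ) : ℝ :=
  (1 / 2) * ∑ w, |p w - q w|

/-- Chord bound: for `1 ≤ x ≤ M`, `x log x ≤ (x-1)/(M-1) · M log M`. -/
lemma chord_mul_log {M x : ℝ} (hM : 1 < M) (hx1 : 1 ≤ x) (hxM : x ≤ M) :
    x * Real.log x ≤ (x - 1) / (M - 1) * (M * Real.log M) := by
  have hM1 : (0:ℝ) < M - 1 := by linarith
  set t : ℝ := (M - x) / (M - 1) with ht
  have ht0 : 0 ≤ t := div_nonneg (by linarith) hM1.le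
  have ht1 : 0 ≤ 1 - t := by
    have : t ≤ 1 := by
      rw [div_le_one hM1]; linarith
    linarith
  have hxeq : t + (1 - t) * M = x := by
    field_simp [ht]
    rw [ht]; field_simp; ring
  have key := Real.convexOn_mul_log.2 (Set.mem_Ici.2 (by norm_num : (0:ℝ) ≤ 1))
    (Set.mem_Ici.2 (by linarith : (0:ℝ) ≤ M)) ht0 ht1 (by ring)
  simp only [smul_eq_mul, mul_one, hxeq, Real.log_one, mul_zero] at key
  have h1t : 1 - t = (x - 1) / (M - 1) := by
    rw [ht]; field_simp; ring
  calc x * Real.log x ≤ t * 0 + (1 - t) * (M * Real.log M) := by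
        simpa using key
    _ = (x - 1) / (M - 1) * (M * Real.log M) := by rw [h1t]; ring

/-- **Reverse Pinsker inequality** (Theorem 7 of Verdú 2014).  If `P ≪ Q` on a finite
set and `β⁻¹ = max_{w : Q(w)>0} P(w)/Q(w)` with `0 < β < 1`, then
`TV(P,Q) ≥ ((1 − β)/log₂(1/β))·KL(P‖Q)`. -/
theorem reverse_pinsker
    {Ω : Type*} [Fintype Ω]
    (P Q : Ω → ℝ)
    (hP : (∀ w, 0 ≤ P w) ∧ ∑ w, P w = 1)
    (hQ : (∀ w, 0 ≤ Q w) ∧ ∑ w, Q w = 1)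
    (hac : ∀ w, Q w = 0 → P w = 0)
    (β : ℝ) (hβpos : 0 < β) (hβlt : β < 1)
    (hβdef : IsGreatest {r : ℝ | ∃ w, 0 < Q w ∧ r = P w / Q w} β⁻¹) :
    ((1 - β) / Real.logb 2 (1 / β)) * klDivb2 P Q ≤ tvDist P Q := by
  obtain ⟨hP0, hP1⟩ := hP
  obtain ⟨hQ0, hQ1⟩ := hQ
  set M : ℝ := 1 / β with hMdef
  have hM1 : 1 < M := (one_lt_div hβpos).2 hβlt
  have hM0 : 0 < M := by linarith
  have hL : 0 < Real.logb 2 M := Real.logb_pos one_lt_two hM1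
  set c : ℝ := Real.logb 2 M / (1 - β) with hc
  have hβ1 : 0 < 1 - β := by linarith
  have hcpos : 0 < c := div_pos hL hβ1
  -- pointwise bound: each KL term ≤ c * max (P w - Q w) 0
  have hpt : ∀ w, (if P w = 0 then 0 else P w * Real.logb 2 (P w / Q w))
      ≤ c * max (P w - Q w) 0 := by
    intro w
    by_cases hPw : P w = 0
    · rw [if_pos hPw]
      exact mul_nonneg hcpos.le (le_max_right _ _)
    · have hPwpos : 0 < P w := lt_of_le_of_ne (hP0 w) (Ne.symm hPw)
      have hQwpos : 0 < Q w := by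
        rcases lt_or_eq_of_le (hQ0 w) with h | h
        · exact h
        · exact absurd (hac w h.symm) hPw
      set x : ℝ := P w / Q w with hx
      have hxpos : 0 < x := div_pos hPwpos hQwpos
      have hxM : x ≤ M := by
        have := hβdef.2 ⟨w, hQwpos, rfl⟩
        rwa [hMdef, one_div]
      rw [if_neg hPw]
      rcases le_or_gt x 1 with hx1 | hx1
      · have hlog : Real.logb 2 x ≤ 0 := Real.logb_nonpos one_lt_two hxpos.le hx1
        have : P w * Real.logb 2 x ≤ 0 := mul_nonpos_of_nonneg_of_nonpos hPwpos.le hlog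
        exact this.trans (mul_nonneg hcpos.le (le_max_right _ _))
      · -- x > 1
        have hchord := chord_mul_log hM1 hx1.le hxM
        have hPQ : P w - Q w = Q w * (x - 1) := by
          field_simp [hx]
          rw [hx]; field_simp
        have hmax : max (P w - Q w) 0 = Q w * (x - 1) := by
          rw [hPQ]; exact max_eq_left (mul_nonneg hQwpos.le (by linarith))
        rw [hmax]
        -- P w * logb 2 x = Q w * (x * logb 2 x)
        have hPx : P w = Q w * x := by field_simp [hx]; rw [hx]; field_simp
        have hlog2 : (0:ℝ) < Real.log 2 := Real.log_pos one_lt_two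
        rw [hPx, mul_assoc, show c * (Q w * (x - 1)) = Q w * (c * (x - 1)) by ring]
        refine mul_le_mul_of_nonneg_left ?_ hQwpos.le
        -- x * logb 2 x ≤ c * (x - 1)
        have hgoal : x * (Real.log x / Real.log 2) ≤ c * (x - 1) := by
          have hcM : c * (x - 1) * Real.log 2 = (x - 1) / (M - 1) * (M * Real.log M) := by
            have hM1' : M - 1 ≠ 0 := by linarith
            have hMβ : M - 1 = (1 - β) / β := by
              rw [hMdef]; field_simp
            have hMlog : M * Real.log M = M * (Real.logb 2 M * Real.log 2) := by
              rw [Real.logb, div_mul_cancel₀]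
              exact hlog2.ne'
            rw [hc, hMβ, hMlog, hMdef]
            field_simp
          rw [show x * (Real.log x / Real.log 2) = x * Real.log x / Real.log 2 from by ring,
            div_le_iff₀ hlog2]
          calc x * Real.log x
              ≤ (x - 1) / (M - 1) * (M * Real.log M) := hchord
            _ = c * (x - 1) * Real.log 2 := hcM.symm
        simpa [Real.logb] using hgoal
  -- sum the pointwise bounds
  have hsum : klDivb2 P Q ≤ c * ∑ w, max (P w - Q w) 0 := by
    rw [Finset.mul_sum]
    exact Finset.sum_le_sum fun w _ => hpt w
  -- TV = Σ max (P - Q) 0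
  have htv : tvDist P Q = ∑ w, max (P w - Q w) 0 := by
    have hdiff : ∑ w, (P w - Q w) = 0 := by
      rw [Finset.sum_sub_distrib, hP1, hQ1]; ring
    have habs : ∀ w, |P w - Q w| = 2 * max (P w - Q w) 0 - (P w - Q w) := by
      intro w
      rcases le_or_gt 0 (P w - Q w) with h | h
      · rw [abs_of_nonneg h, max_eq_left h]; ring
      · rw [abs_of_neg h, max_eq_right h.le]; ring
    rw [tvDist]
    simp_rw [habs]
    rw [Finset.sum_sub_distrib, hdiff, sub_zero, ← Finset.mul_sum]
    ring
  -- conclude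
  have hfinal : klDivb2 P Q ≤ c * tvDist P Q := by rw [htv]; exact hsum
  have hcoef : (1 - β) / Real.logb 2 (1 / β) * c = 1 := by
    rw [hc, hMdef]
    field_simp
    exact div_self hL.ne'
  have hcoefpos : 0 < (1 - β) / Real.logb 2 (1 / β) := div_pos hβ1 (by rw [← hMdef]; exact hL)
  calc ((1 - β) / Real.logb 2 (1 / β)) * klDivb2 P Q
      ≤ ((1 - β) / Real.logb 2 (1 / β)) * (c * tvDist P Q) :=
        mul_le_mul_of_nonneg_left hfinal hcoefpos.le
    _ = ((1 - β) / Real.logb 2 (1 / β) * c) * tvDist P Q := by ring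
    _ = tvDist P Q := by rw [hcoef, one_mul]
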